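/- arXiv:2207.05389 — 6 statements merged into one kernel-verified Lean document; each statement's English description precedes it below -/
import Mathlib

section
/- Given any vector (a, b) ∈ ℂ²ⁿ \ {0}, there exist symmetric n×n complex matrices Z₁, Z₂, Z₃ such that [[I, Z₃], [0, I]] · [[I, 0], [Z₂, I]] · [[I, Z₁], [0, I]] · e₂ₙ = (a, b), where e₂ₙ is the last standard basis vector of ℂ²ⁿ; moreover Z₁ can be chosen with Z₁eₙ ≠ 0. -/
open Matrix

lemma exists_symm_mulVec {m : ℕ} (v w : Fin m → ℂ) (hv : v ≠ 0) :
    ∃ Z : Matrix (Fin m) (Fin m) ℂ, Zᵀ = Z ∧ Z.mulVec v = w := by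
  obtain ⟨i, hi⟩ : ∃ i, v i ≠ 0 := by
    by_contra h
    push_neg at h
    exact hv (funext h)
  refine ⟨((v i)⁻¹) • (vecMulVec w (Pi.single i 1) + vecMulVec (Pi.single i 1) w)
      - ((w ⬝ᵥ v) * (v i)⁻¹ * (v i)⁻¹) • vecMulVec (Pi.single i 1) (Pi.single i 1), ?_, ?_⟩
  · ext j k
    simp [vecMulVec, transpose, Matrix.sub_apply, Matrix.smul_apply]
    ring
  · ext j
    simp [mulVec, dotProduct, vecMulVec, Matrix.sub_apply, Matrix.smul_apply,
      Finset.sum_sub_distrib, Finset.mul_sum, mul_add, add_mul, sub_mul, mul_sub,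
      Finset.sum_add_distrib, Pi.single_apply, Finset.sum_ite_eq', mul_comm, mul_assoc,
      mul_left_comm]
    rcases eq_or_ne j i with rfl | hj
    · have key : ∀ x, v j * (v x * (w x * ((v j)⁻¹ * (v j)⁻¹))) = v x * (w x * (v j)⁻¹) := by
        intro x; field_simp
      simp only [key]
      field_simp
      simp
    · simp [hj]
      field_simp

theorem phi3_surjective (n : ℕ) (a b : Fin (n + 1) → ℂ) (hab : ¬(a = 0 ∧ b = 0)) :
    ∃ Z₁ Z₂ Z₃ : Matrix (Fin (n + 1)) (Fin (n + 1)) ℂ,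
      Z₁ᵀ = Z₁ ∧ Z₂ᵀ = Z₂ ∧ Z₃ᵀ = Z₃ ∧
      Z₁.mulVec (Pi.single (Fin.last n) 1) ≠ 0 ∧
      (fromBlocks 1 Z₃ 0 1 * fromBlocks 1 0 Z₂ 1 * fromBlocks 1 Z₁ 0 1).mulVec
        (Sum.elim 0 (Pi.single (Fin.last n) 1)) = Sum.elim a b := by
  set e : Fin (n + 1) → ℂ := Pi.single (Fin.last n) 1 with he
  have hene : e ≠ 0 := by
    intro h
    have := congrFun h (Fin.last n)
    simp [he] at this
  by_cases hb : b = 0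
  · have ha : a ≠ 0 := fun h => hab ⟨h, hb⟩
    obtain ⟨Z₁, hZ₁s, hZ₁⟩ := exists_symm_mulVec e a hene
    obtain ⟨Z₂, hZ₂s, hZ₂⟩ := exists_symm_mulVec a (-e) ha
    refine ⟨Z₁, Z₂, 0, hZ₁s, hZ₂s, by simp, by rw [hZ₁]; exact ha, ?_⟩
    rw [← mulVec_mulVec, ← mulVec_mulVec]
    simp [fromBlocks_mulVec, hZ₁, hZ₂, hb]
  · obtain ⟨Z₂, hZ₂s, hZ₂⟩ := exists_symm_mulVec e (b - e) hene
    obtain ⟨Z₃, hZ₃s, hZ₃⟩ := exists_symm_mulVec b (a - e) hb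
    refine ⟨1, Z₂, Z₃, by simp, hZ₂s, hZ₃s, by simpa using hene, ?_⟩
    rw [← mulVec_mulVec, ← mulVec_mulVec]
    simp [fromBlocks_mulVec, hZ₂, hZ₃]
end

section
/- (Whitehead's lemma, off-diagonal case) For a commutative ring R with identity, i ≠ j, and any a ∈ R, the symplectic matrix K_ij(a) equals the product F_jj(−a) · E_ij(1) · F_jj(a) · E_ii(a) · E_ij(−1). -/
open Matrix

lemma stdB_neg {R : Type*} [CommRing R] {n : ℕ} (i j : Fin n) (c : R) :
    Matrix.single i j (-c) = -Matrix.single i j c := by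
  ext k l
  simp [Matrix.single]
  aesop

theorem whitehead_offdiagonal (R : Type*) [CommRing R] (n : ℕ) (i j : Fin n)
    (hij : i ≠ j) (a : R) :
    (fromBlocks (1 + Matrix.single i j a) 0 0
        (1 + Matrix.single j i (-a)) : Matrix (Fin n ⊕ Fin n) (Fin n ⊕ Fin n) R) =
      fromBlocks 1 0 (Matrix.single j j (-a)) 1 *
      fromBlocks 1 (Matrix.single i j (1 : R) + Matrix.single j i (1 : R)) 0 1 *
      fromBlocks 1 0 (Matrix.single j j a) 1 *
      fromBlocks 1 (Matrix.single i i a) 0 1 *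
      fromBlocks 1 (Matrix.single i j (-1 : R) + Matrix.single j i (-1 : R)) 0 1 := by
  simp only [fromBlocks_multiply, Matrix.one_mul, Matrix.mul_one, Matrix.mul_zero,
    Matrix.zero_mul, add_zero, zero_add]
  rw [fromBlocks_inj]
  refine ⟨?_, ?_, ?_, ?_⟩
  all_goals simp [Matrix.add_mul, Matrix.mul_add, Matrix.single_mul_single_same,
    Matrix.single_mul_single_of_ne, hij, hij.symm, ← Matrix.single_add, stdB_neg]
  all_goals abel
end

section
/- (Complementary bases theorem) Let M = [[A, B], [C, D]] be a symplectic 2n×2n complex matrix and let k = rank(B). If j₁ < … < j_k are indices such that Be_{j₁}, …, Be_{j_k} form a basis of the column space of B, and i₁ < … < i_{n−k} are the complementary indices in {1, …, n}, then the n×n matrix X with columns Ae_{i₁}, …, Ae_{i_{n−k}}, Be_{j₁}, …, Be_{j_k} is invertible. -/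
open Matrix

theorem complementary_bases (n : ℕ) (A B C D : Matrix (Fin n) (Fin n) ℂ)
    (hsymp : (fromBlocks A B C D)ᵀ * (fromBlocks 0 1 (-1) 0) * (fromBlocks A B C D) =
      (fromBlocks (0 : Matrix (Fin n) (Fin n) ℂ) 1 (-1) 0))
    (s : Finset (Fin n)) (hcard : s.card = B.rank)
    (hindep : LinearIndependent ℂ (fun j : s => Bᵀ (j : Fin n)))
    (hspan : Submodule.span ℂ (Set.range fun j : s => Bᵀ (j : Fin n)) =
      Submodule.span ℂ (Set.range fun j : Fin n => Bᵀ j)) :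
    IsUnit (Matrix.of fun i j : Fin n => if j ∈ s then B i j else A i j).det := by
  -- Extract the two block identities we need from symplecticity
  rw [Matrix.fromBlocks_transpose, Matrix.fromBlocks_multiply, Matrix.fromBlocks_multiply]
    at hsymp
  have h21 := congrArg Matrix.toBlocks₂₁ hsymp
  have h22 := congrArg Matrix.toBlocks₂₂ hsymp
  simp only [Matrix.toBlocks_fromBlocks₂₁, Matrix.toBlocks_fromBlocks₂₂] at h21 h22
  have hDA : Dᵀ * A - Bᵀ * C = 1 := by linear_combination (norm := noncomm_ring) -h21
  have hDB : Dᵀ * B = Bᵀ * D := by linear_combination (norm := noncomm_ring) -h22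
  -- reduce to injectivity
  rw [isUnit_iff_ne_zero]
  intro hdet
  rw [← Matrix.exists_mulVec_eq_zero_iff] at hdet
  obtain ⟨v, hv0, hv⟩ := hdet
  set u : Fin n → ℂ := fun j => if j ∈ s then 0 else v j with hu_def
  set w : Fin n → ℂ := fun j => if j ∈ s then v j else 0 with hw_def
  have hsplit : A *ᵥ u + B *ᵥ w = 0 := by
    rw [← hv]
    funext i
    simp only [Pi.add_apply, Matrix.mulVec, dotProduct, Matrix.of_apply, hu_def, hw_def,
      mul_ite, mul_zero]
    rw [← Finset.sum_add_distrib]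
    refine Finset.sum_congr rfl fun j _ => ?_
    split_ifs <;> ring
  have hAu : A *ᵥ u = B *ᵥ (-w) := by
    rw [Matrix.mulVec_neg]
    exact eq_neg_of_add_eq_zero_left hsplit
  -- u lies in the row space of B
  set y : Fin n → ℂ := D *ᵥ (-w) - C *ᵥ u with hy_def
  have hu_row : u = Bᵀ *ᵥ y := by
    calc u = (Dᵀ * A - Bᵀ * C) *ᵥ u := by rw [hDA, Matrix.one_mulVec]
    _ = Dᵀ *ᵥ (A *ᵥ u) - Bᵀ *ᵥ (C *ᵥ u) := by
        rw [Matrix.sub_mulVec, ← Matrix.mulVec_mulVec, ← Matrix.mulVec_mulVec]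
    _ = (Dᵀ * B) *ᵥ (-w) - Bᵀ *ᵥ (C *ᵥ u) := by rw [hAu, Matrix.mulVec_mulVec]
    _ = Bᵀ *ᵥ (D *ᵥ (-w)) - Bᵀ *ᵥ (C *ᵥ u) := by rw [hDB, ← Matrix.mulVec_mulVec]
    _ = Bᵀ *ᵥ y := by rw [hy_def, Matrix.mulVec_sub]
  -- the linear functional x ↦ x ⬝ᵥ y kills all rows of Bᵀ, hence u = 0
  let f : (Fin n → ℂ) →ₗ[ℂ] ℂ :=
    { toFun := fun x => x ⬝ᵥ y
      map_add' := fun a b => add_dotProduct a b y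
      map_smul' := fun c a => smul_dotProduct c a y }
  have hker : Submodule.span ℂ (Set.range fun j : s => Bᵀ (j : Fin n)) ≤ LinearMap.ker f := by
    rw [Submodule.span_le]
    rintro x ⟨j, rfl⟩
    have : (Bᵀ *ᵥ y) (j : Fin n) = 0 := by
      rw [← hu_row]; simp [hu_def, j.2]
    simpa [f, LinearMap.mem_ker, Matrix.mulVec, dotProduct, Matrix.transpose_apply] using this
  have hu0 : u = 0 := by
    funext j
    have hmem : Bᵀ j ∈ LinearMap.ker f := by
      apply hker
      rw [hspan]
      exact Submodule.subset_span ⟨j, rfl⟩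
    have : Bᵀ j ⬝ᵥ y = 0 := hmem
    rw [hu_row]
    simpa [Matrix.mulVec, dotProduct, Matrix.transpose_apply] using this
  -- now B *ᵥ w = 0 and linear independence gives w = 0
  have hBw : B *ᵥ w = 0 := by
    rw [hu0, Matrix.mulVec_zero, zero_add] at hsplit
    exact hsplit
  have hsum : ∑ j : s, v (j : Fin n) • Bᵀ (j : Fin n) = 0 := by
    funext i
    rw [← congrFun hBw i]
    simp only [Finset.sum_apply, Pi.smul_apply, smul_eq_mul, Matrix.mulVec, dotProduct,
      hw_def, mul_ite, mul_zero, Matrix.transpose_apply]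
    rw [Finset.sum_ite_mem, Finset.univ_inter,
      ← Finset.sum_coe_sort s (fun j => B i j * v j)]
    exact Finset.sum_congr rfl fun j _ => mul_comm _ _
  have hw0 : ∀ j : s, v (j : Fin n) = 0 :=
    (Fintype.linearIndependent_iff.mp hindep) (fun j => v (j : Fin n)) hsum
  apply hv0
  funext j
  by_cases hj : j ∈ s
  · exact hw0 ⟨j, hj⟩
  · have := congrFun hu0 j
    simpa [hu_def, hj] using this
end

section
/- Let Z be a symmetric n×n complex matrix of rank k, let j₁ < … < j_k be indices such that Ze_{j₁}, …, Ze_{j_k} form a basis of the column space of Z, and let i₁, …, i_{n−k} be the complementary indices. Then the k×k principal submatrix of Z obtained by deleting rows and columns i₁, …, i_{n−k} is invertible. -/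
open Matrix

theorem principal_minor_invertible (n : ℕ) (Z : Matrix (Fin n) (Fin n) ℂ) (hZ : Zᵀ = Z)
    (s : Finset (Fin n)) (hcard : s.card = Z.rank)
    (hindep : LinearIndependent ℂ (fun j : s => Zᵀ (j : Fin n)))
    (hspan : Submodule.span ℂ (Set.range fun j : s => Zᵀ (j : Fin n)) =
      Submodule.span ℂ (Set.range fun j : Fin n => Zᵀ j)) :
    IsUnit (Z.submatrix (fun j : s => (j : Fin n)) (fun j : s => (j : Fin n))).det := by
  classical
  set T : (Fin n → ℂ) →ₗ[ℂ] (↥s → ℂ) := LinearMap.funLeft ℂ ℂ (Subtype.val) with hT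
  set M := Z.submatrix (fun j : s => (j : Fin n)) (fun j : s => (j : Fin n)) with hM
  set A : Matrix s (Fin n) ℂ := Z.submatrix (fun j : s => (j : Fin n)) id with hA
  have hAindep : LinearIndependent ℂ (fun i : s => A i) := by
    have : (fun i : s => A i) = fun j : s => Zᵀ (j : Fin n) := by
      funext i; funext j; rw [hA]; simp only [Matrix.submatrix_apply, id_eq, Matrix.transpose_apply]; nth_rewrite 1 [← hZ]; rfl
    rw [this]; exact hindep
  have hArank : A.rank = Fintype.card s := hAindep.rank_matrix
  have h1 : Set.range Mᵀ = T '' Set.range (fun j : s => Zᵀ (j : Fin n)) := by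
    rw [← Set.range_comp]; rfl
  have h2 : Set.range Aᵀ = T '' Set.range (fun j : Fin n => Zᵀ j) := by
    rw [← Set.range_comp]; rfl
  have hcols : Submodule.span ℂ (Set.range Mᵀ) = Submodule.span ℂ (Set.range Aᵀ) := by
    rw [h1, h2, ← Submodule.map_span, ← Submodule.map_span, hspan]
  have hrankM : Module.finrank ℂ (Submodule.span ℂ (Set.range Mᵀ)) = Fintype.card s := by
    rw [hcols, show Set.range Aᵀ = Set.range A.col from rfl, ← Matrix.rank_eq_finrank_span_cols, hArank]
  have htop : Submodule.span ℂ (Set.range Mᵀ) = ⊤ := by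
    apply Submodule.eq_top_of_finrank_eq
    rw [hrankM, Module.finrank_fintype_fun_eq_card]
  have hsurj : Function.Surjective M.mulVec := by
    have := M.range_mulVecLin
    rw [show Set.range M.col = Set.range Mᵀ from rfl, htop] at this
    intro y
    obtain ⟨x, hx⟩ := LinearMap.range_eq_top.mp this y
    exact ⟨x, hx⟩
  exact (Matrix.isUnit_iff_isUnit_det M).mp (Matrix.mulVec_surjective_iff_isUnit.mp hsurj)
end

section
/- Suppose a polynomial map P : ℂᵐ → ℂ^{m−1} has the property that there exist a constant vector v ∈ ℂ^{m−1} and constants λ_{ij} ∈ ℂ with ∂²P/∂x_i∂x_j = λ_{ij} v for all i, j. Then each first partial derivative has the form ∂P/∂x_j = c_j + f_j(x)·v for a constant vector c_j and the linear function f_j(x) = Σ_k λ_{kj} x_k, and consequently the vector field V = D_x(P) (component j = signed (m−1)-minor of the Jacobian omitting column j) is affine, i.e. V(x) = Ax + b for some constant matrix A and vector b; in particular V is ℂ-complete. -/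
open MvPolynomial Matrix

lemma coeff_pderiv {n : ℕ} (i : Fin n) (f : MvPolynomial (Fin n) ℂ) (d : Fin n →₀ ℕ) :
    coeff d (pderiv i f) = ((d i + 1 : ℕ) : ℂ) * coeff (d + Finsupp.single i 1) f := by
  induction f using MvPolynomial.induction_on' with
  | monomial s a =>
    rw [pderiv_monomial, coeff_monomial, coeff_monomial]
    by_cases hs : s i = 0
    · have h1 : s - Finsupp.single i 1 ≠ d ∨ a * (s i : ℂ) = 0 := Or.inr (by simp [hs])
      have h2 : s ≠ d + Finsupp.single i 1 := by
        intro h; rw [h] at hs; simp at hs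
      rcases h1 with h | h
      · simp [h2, hs]
      · simp [h2, hs]
    · by_cases he : s = d + Finsupp.single i 1
      · subst he
        have : d + Finsupp.single i 1 - Finsupp.single i 1 = d := by
          ext j; simp
        simp [this]
        ring
      · have : s - Finsupp.single i 1 ≠ d := by
          intro h
          apply he
          rw [← h]
          ext j
          by_cases hj : j = i
          · subst hj; simp; omega
          · simp [Finsupp.single_eq_of_ne' (Ne.symm hj)]
        simp [this, he]
  | add p q hp hq => simp [map_add, coeff_add, hp, hq, mul_add]

lemma eq_affine_of_pderiv_const {n : ℕ} (f : MvPolynomial (Fin n) ℂ) (a : Fin n → ℂ)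
    (h : ∀ i, pderiv i f = C (a i)) :
    f = C (coeff 0 f) + ∑ i, C (a i) * X i := by
  apply MvPolynomial.ext
  intro d
  rw [coeff_add, coeff_C]
  rw [show (∑ i, C (a i) * X i : MvPolynomial (Fin n) ℂ).coeff d
      = ∑ i, a i * (X i : MvPolynomial (Fin n) ℂ).coeff d by
    rw [MvPolynomial.coeff_sum]; exact Finset.sum_congr rfl fun i _ => coeff_C_mul d (a i) (X i)]
  by_cases hd : d = 0
  · subst hd
    simp [coeff_X']
  · -- pick i in support
    obtain ⟨i, hi⟩ : ∃ i, d i ≠ 0 := by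
      by_contra hc
      push_neg at hc
      exact hd (Finsupp.ext fun j => hc j)
    have hle : Finsupp.single i 1 ≤ d := by
      rw [Finsupp.single_le_iff]; omega
    have hsum : (d - Finsupp.single i 1) + Finsupp.single i 1 = d := tsub_add_cancel_of_le hle
    have key := coeff_pderiv i f (d - Finsupp.single i 1)
    rw [h i, hsum] at key
    have hdi : (((d - Finsupp.single i 1) : Fin n →₀ ℕ) i + 1 : ℕ) = d i := by
      simp [Finsupp.sub_apply]; omega
    rw [hdi] at key
    by_cases hsingle : d = Finsupp.single i 1
    · have h0 : d - Finsupp.single i 1 = 0 := by rw [hsingle]; simp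
      rw [h0, coeff_C, if_pos rfl] at key
      have hd1 : d i = 1 := by rw [hsingle]; simp
      rw [hd1] at key
      simp only [Nat.cast_one, one_mul] at key
      rw [if_neg (Ne.symm hd), zero_add]
      rw [Finset.sum_eq_single i]
      · rw [coeff_X', if_pos hsingle.symm, mul_one, ← key]
      · intro j _ hj
        rw [coeff_X', if_neg, mul_zero]
        intro hc
        apply hj
        have h2 : (Finsupp.single j 1 : Fin n →₀ ℕ) = Finsupp.single i 1 := hc.trans hsingle
        have h3 := DFunLike.congr_fun h2 j
        simp only [Finsupp.single_eq_same] at h3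
        by_contra hji
        rw [Finsupp.single_eq_of_ne' (Ne.symm hji)] at h3
        exact one_ne_zero h3
      · intro hc; exact absurd (Finset.mem_univ i) hc
    · -- coeff d f = 0
      have h0 : d - Finsupp.single i 1 ≠ 0 := by
        intro hc
        apply hsingle
        rw [← hsum, hc, zero_add]
      rw [coeff_C, if_neg (Ne.symm h0)] at key
      have : coeff d f = 0 := by
        have hne : ((d i : ℕ) : ℂ) ≠ 0 := Nat.cast_ne_zero.mpr hi
        field_simp at key
        rcases mul_eq_zero.mp key.symm with h | h
        · exact absurd h hne
        · exact h
      rw [this, if_neg (Ne.symm hd), zero_add]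
      rw [Finset.sum_eq_zero]
      intro j _
      rw [coeff_X', if_neg, mul_zero]
      intro hc
      -- d = single j 1, then i = j since d i ≠ 0, contradiction with hsingle
      apply hsingle
      rw [← hc]
      congr 1
      by_contra hij
      rw [← hc] at hi
      exact hi (Finsupp.single_eq_of_ne' hij)

lemma pderiv_prod {n N : ℕ} (i : Fin n) (s : Finset (Fin N)) (f : Fin N → MvPolynomial (Fin n) ℂ) :
    pderiv i (∏ k ∈ s, f k) = ∑ k ∈ s, pderiv i (f k) * ∏ k' ∈ s.erase k, f k' := by
  induction s using Finset.induction_on with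
  | empty => simp
  | insert _ _ ha ih =>
    rename_i a s
    rw [Finset.prod_insert ha, pderiv_mul, ih, Finset.sum_insert ha, Finset.erase_insert ha,
      Finset.mul_sum]
    congr 1
    refine Finset.sum_congr rfl fun k hk => ?_
    have hka : k ≠ a := fun hc => ha (hc ▸ hk)
    rw [Finset.erase_insert_of_ne (Ne.symm hka), Finset.prod_insert (by
      simp only [Finset.mem_erase, not_and]
      exact fun _ => ha)]
    ring

lemma pderiv_int_cast {n : ℕ} (i : Fin n) (z : ℤ) :
    pderiv i ((z : MvPolynomial (Fin n) ℂ)) = 0 := by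
  rw [show ((z : MvPolynomial (Fin n) ℂ)) = (C : ℂ →+* MvPolynomial (Fin n) ℂ) ((z : ℂ)) from
    (map_intCast (C : ℂ →+* MvPolynomial (Fin n) ℂ) z).symm, pderiv_C]

lemma pderiv_det {n N : ℕ} (i : Fin n) (M : Matrix (Fin N) (Fin N) (MvPolynomial (Fin n) ℂ)) :
    pderiv i M.det = ∑ j, (M.updateRow j (fun r => pderiv i (M j r))).det := by
  have hrow : ∀ (j : Fin N) (σ : Equiv.Perm (Fin N)),
      (∏ k, (M.updateRow j fun r => pderiv i (M j r)) (σ k) k)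
        = pderiv i (M j (σ.symm j)) * ∏ k ∈ Finset.univ.erase (σ.symm j), M (σ k) k := by
    intro j σ
    rw [← Finset.mul_prod_erase Finset.univ _ (Finset.mem_univ (σ.symm j))]
    congr 1
    · rw [updateRow_apply, if_pos (σ.apply_symm_apply j)]
    · refine Finset.prod_congr rfl fun k hk => ?_
      rw [updateRow_apply, if_neg]
      intro hc
      simp only [Finset.mem_erase] at hk
      exact hk.1 (by rw [← hc, Equiv.symm_apply_apply])
  rw [show (∑ j, (M.updateRow j (fun r => pderiv i (M j r))).det)
      = ∑ j, ∑ σ : Equiv.Perm (Fin N), Equiv.Perm.sign σ •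
          ∏ k, (M.updateRow j fun r => pderiv i (M j r)) (σ k) k from
    Finset.sum_congr rfl fun j _ => det_apply _]
  rw [Finset.sum_comm]
  rw [det_apply, map_sum]
  simp only [Units.smul_def, zsmul_eq_mul]
  refine Finset.sum_congr rfl fun σ _ => ?_
  rw [pderiv_mul, pderiv_int_cast, zero_mul, zero_add, pderiv_prod, Finset.mul_sum]
  simp only [hrow]
  refine Fintype.sum_equiv σ _ _ fun k => ?_
  simp [Equiv.symm_apply_apply]

lemma eq_affine_of_pderiv2_zero {n : ℕ} (f : MvPolynomial (Fin n) ℂ)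
    (h : ∀ i i', pderiv i (pderiv i' f) = 0) :
    f = (∑ l, C (coeff (Finsupp.single l 1) f) * X l) + C (coeff 0 f) := by
  have h1 : ∀ i', pderiv i' f = C (coeff 0 (pderiv i' f)) := by
    intro i'
    have := eq_affine_of_pderiv_const (pderiv i' f) (fun _ => 0) (fun i => by rw [h i i', map_zero])
    simpa using this
  have h2 : ∀ i', coeff 0 (pderiv i' f) = coeff (Finsupp.single i' 1) f := by
    intro i'
    rw [coeff_pderiv]
    simp
  have := eq_affine_of_pderiv_const f (fun i' => coeff (Finsupp.single i' 1) f)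
    (fun i' => by rw [h1 i', h2 i'])
  refine this.trans ?_
  ring

lemma updateRow_comm {N : ℕ} {R : Type*} (M : Matrix (Fin N) (Fin N) R) {k k' : Fin N}
    (h : k ≠ k') (u u' : Fin N → R) :
    (M.updateRow k u).updateRow k' u' = (M.updateRow k' u').updateRow k u := by
  ext a b
  rcases eq_or_ne a k with rfl | hak
  · rw [updateRow_ne h, updateRow_self, updateRow_self]
  · rcases eq_or_ne a k' with rfl | hak'
    · rw [updateRow_self, updateRow_ne (Ne.symm h), updateRow_self]
    · rw [updateRow_ne hak', updateRow_ne hak, updateRow_ne hak, updateRow_ne hak']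

lemma affine_flow (n : ℕ) (A : Matrix (Fin n) (Fin n) ℂ) (b : Fin n → ℂ) (x₀ : Fin n → ℂ) :
    ∃ γ : ℂ → (Fin n → ℂ), γ 0 = x₀ ∧
      ∀ t : ℂ, HasDerivAt γ (fun j => (∑ l, A j l * γ t l) + b j) t := by
  classical
  set ι := Fin n ⊕ Unit with hι
  set Ahat : Matrix ι ι ℂ :=
    Matrix.of (Sum.elim (fun j => Sum.elim (A j) (fun _ => b j)) (fun _ _ => 0)) with hAhat
  set T : (ι → ℂ) →L[ℂ] (ι → ℂ) := LinearMap.toContinuousLinearMap (Matrix.mulVecLin Ahat) with hT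
  have hTapp : ∀ z : ι → ℂ, T z = Ahat *ᵥ z := fun z => rfl
  set y₀ : ι → ℂ := Sum.elim x₀ (fun _ => 1) with hy₀
  set y : ℂ → (ι → ℂ) := fun t => (NormedSpace.exp (t • T)) y₀ with hy
  -- derivative of y
  have hyderiv : ∀ t : ℂ, HasDerivAt y (T (y t)) t := by
    intro t
    have h1 := hasDerivAt_exp_smul_const' (𝕂 := ℂ) T t
    have h2 := h1.clm_apply (hasDerivAt_const t y₀)
    simpa [ContinuousLinearMap.mul_apply] using h2
  -- the last coordinate is constant 1
  have hlast : ∀ t : ℂ, y t (Sum.inr ()) = 1 := by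
    intro t
    have hT0 : ∀ z : ι → ℂ, T z (Sum.inr ()) = 0 := by
      intro z
      rw [hTapp]
      simp [Matrix.mulVec, dotProduct, hAhat]
    set φ : ((ι → ℂ) →L[ℂ] (ι → ℂ)) →L[ℂ] ℂ :=
      (ContinuousLinearMap.proj (R := ℂ) (Sum.inr () : ι)).comp
        ((ContinuousLinearMap.apply ℂ (ι → ℂ)) y₀) with hφ
    have hφ_apply : ∀ S : (ι → ℂ) →L[ℂ] (ι → ℂ), φ S = S y₀ (Sum.inr ()) := fun S => rfl
    have hexp : NormedSpace.exp (t • T) = ∑' k : ℕ, ((Nat.factorial k : ℂ))⁻¹ • (t • T) ^ k := by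
      rw [NormedSpace.exp_eq_tsum (𝕂 := ℂ)]
    have hsummable : Summable (fun k : ℕ => ((Nat.factorial k : ℂ))⁻¹ • (t • T) ^ k) :=
      NormedSpace.expSeries_summable' (𝕂 := ℂ) (t • T)
    have : y t (Sum.inr ()) = φ (NormedSpace.exp (t • T)) := rfl
    rw [this, hexp, φ.map_tsum hsummable]
    have hterm : ∀ k : ℕ, k ≠ 0 → φ (((Nat.factorial k : ℂ))⁻¹ • (t • T) ^ k) = 0 := by
      intro k hk
      obtain ⟨k', rfl⟩ := Nat.exists_eq_succ_of_ne_zero hk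
      rw [_root_.map_smul, hφ_apply]
      rw [pow_succ']
      rw [ContinuousLinearMap.mul_apply]
      rw [ContinuousLinearMap.smul_apply]
      simp [hT0]
    rw [tsum_eq_single 0 hterm]
    rw [_root_.map_smul, hφ_apply]
    simp [hy₀]
  refine ⟨fun t j => y t (Sum.inl j), ?_, ?_⟩
  · funext j
    show (NormedSpace.exp ((0:ℂ) • T)) y₀ (Sum.inl j) = x₀ j
    have h0 : (0:ℂ) • T = 0 := zero_smul ℂ T
    rw [h0, NormedSpace.exp_zero, ContinuousLinearMap.one_apply]
    rfl
  · intro t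
    set Q : (ι → ℂ) →L[ℂ] (Fin n → ℂ) :=
      ContinuousLinearMap.pi (fun j => ContinuousLinearMap.proj (R := ℂ) (Sum.inl j : ι)) with hQ
    have h3 := (hasDerivAt_const t Q).clm_apply (hyderiv t)
    simp only [ContinuousLinearMap.zero_apply, zero_add] at h3
    have h4 : Q (T (y t)) = fun j => (∑ l, A j l * y t (Sum.inl l)) + b j := by
      funext j
      show T (y t) (Sum.inl j) = _
      rw [hTapp]
      have hmv : (Ahat *ᵥ y t) (Sum.inl j) = ∑ s : ι, Ahat (Sum.inl j) s * y t s := by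
        simp [Matrix.mulVec, dotProduct]
      rw [hmv]
      rw [show (Finset.univ : Finset ι).sum = (Finset.univ : Finset (Fin n ⊕ Unit)).sum from rfl]
      rw [Fintype.sum_sum_type]
      simp [hAhat, hlast t]
    rw [h4] at h3
    exact h3

theorem Dx_field_affine_complete (m : ℕ) (P : Fin m → MvPolynomial (Fin (m + 1)) ℂ)
    (v : Fin m → ℂ) (lam : Fin (m + 1) → Fin (m + 1) → ℂ)
    (hP : ∀ (i j : Fin (m + 1)) (r : Fin m),
      pderiv i (pderiv j (P r)) = C (lam i j * v r)) :
    let V : Fin (m + 1) → MvPolynomial (Fin (m + 1)) ℂ := fun j =>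
      (-1 : MvPolynomial (Fin (m + 1)) ℂ) ^ (j : ℕ) *
        (Matrix.of fun r : Fin m => fun k : Fin m => pderiv (j.succAbove k) (P r)).det
    (∀ j : Fin (m + 1), ∃ c : Fin m → ℂ, ∀ r : Fin m,
        pderiv j (P r) = C (c r) + (∑ k : Fin (m + 1), C (lam k j) * X k) * C (v r)) ∧
    (∃ (A : Matrix (Fin (m + 1)) (Fin (m + 1)) ℂ) (b : Fin (m + 1) → ℂ),
        ∀ j, V j = (∑ l : Fin (m + 1), C (A j l) * X l) + C (b j)) ∧
    (∀ x₀ : Fin (m + 1) → ℂ, ∃ γ : ℂ → (Fin (m + 1) → ℂ), γ 0 = x₀ ∧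
        ∀ t : ℂ, HasDerivAt γ (fun j => eval (γ t) (V j)) t) := by
  intro V
  -- Part 2 prerequisite: second derivatives of V vanish
  have hVdd : ∀ (j : Fin (m + 1)) (i i' : Fin (m + 1)), pderiv i (pderiv i' (V j)) = 0 := by
    intro j i i'
    have hneg : (-1 : MvPolynomial (Fin (m + 1)) ℂ) ^ (j : ℕ) = C ((-1 : ℂ) ^ (j : ℕ)) := by
      rw [map_pow, map_neg, _root_.map_one]
    show pderiv i (pderiv i' ((-1 : MvPolynomial (Fin (m + 1)) ℂ) ^ (j : ℕ) * _)) = 0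
    rw [hneg, pderiv_C_mul, pderiv_C_mul]
    set N : Matrix (Fin m) (Fin m) (MvPolynomial (Fin (m + 1)) ℂ) :=
      (Matrix.of fun r : Fin m => fun k : Fin m => pderiv (j.succAbove k) (P r))ᵀ with hN
    have hdetT : (Matrix.of fun r : Fin m => fun k : Fin m => pderiv (j.succAbove k) (P r)).det
        = N.det := (Matrix.det_transpose _).symm
    rw [hdetT, pderiv_det, map_sum, Finset.sum_congr rfl (fun k (_ : k ∈ Finset.univ) => pderiv_det i _)]
    have hzero : ∀ k k' : Fin m,
        ((N.updateRow k fun r => pderiv i' (N k r)).updateRow k'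
          (fun r => pderiv i ((N.updateRow k fun r => pderiv i' (N k r)) k' r))).det = 0 := by
      intro k k'
      have hNkr : ∀ k r, pderiv i' (N k r) = C (lam i' (j.succAbove k)) * C (v r) := by
        intro k r
        show pderiv i' (pderiv (j.succAbove k) (P r)) = _
        rw [hP i' (j.succAbove k) r, _root_.map_mul]
      by_cases hkk : k' = k
      · subst hkk
        rw [show (fun r => pderiv i ((N.updateRow k' fun r => pderiv i' (N k' r)) k' r)) = 0 by
          funext r
          rw [updateRow_self, hNkr, ← _root_.map_mul, pderiv_C]; rfl]
        exact det_eq_zero_of_row_eq_zero k' (fun s => by rw [updateRow_self]; rfl)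
      · have hent : (fun r => pderiv i ((N.updateRow k fun r => pderiv i' (N k r)) k' r))
            = fun r => C (lam i (j.succAbove k')) * C (v r) := by
          funext r
          rw [updateRow_ne hkk]
          show pderiv i (pderiv (j.succAbove k') (P r)) = _
          rw [hP i (j.succAbove k') r, _root_.map_mul]
        rw [hent]
        have h1 : (fun r => C (lam i (j.succAbove k')) * C (v r) :
            Fin m → MvPolynomial (Fin (m+1)) ℂ)
            = (C (lam i (j.succAbove k')) : MvPolynomial (Fin (m+1)) ℂ) • (fun r : Fin m => (C (v r) : MvPolynomial (Fin (m+1)) ℂ)) := by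
          funext r; simp [smul_eq_mul]
        have h2 : (fun r => pderiv i' (N k r))
            = (C (lam i' (j.succAbove k)) : MvPolynomial (Fin (m+1)) ℂ) • (fun r : Fin m => (C (v r) : MvPolynomial (Fin (m+1)) ℂ)) := by
          funext r; rw [hNkr]; simp [smul_eq_mul]
        rw [h1, h2, det_updateRow_smul, _root_.updateRow_comm _ (Ne.symm hkk), det_updateRow_smul,
          _root_.updateRow_comm _ hkk]
        rw [det_zero_of_row_eq hkk]
        · ring
        · rw [updateRow_self, updateRow_ne (fun h => hkk h.symm), updateRow_self]
    rw [Finset.sum_congr rfl (fun k _ => Finset.sum_eq_zero (fun k' _ => hzero k k'))]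
    simp
  have part2 : ∃ (A : Matrix (Fin (m + 1)) (Fin (m + 1)) ℂ) (b : Fin (m + 1) → ℂ),
      ∀ j, V j = (∑ l : Fin (m + 1), C (A j l) * X l) + C (b j) := by
    refine ⟨fun j l => coeff (Finsupp.single l 1) (V j), fun j => coeff 0 (V j), fun j => ?_⟩
    exact eq_affine_of_pderiv2_zero (V j) (hVdd j)
  refine ⟨?_, part2, ?_⟩
  · -- Part 1
    intro j
    refine ⟨fun r => coeff 0 (pderiv j (P r)), fun r => ?_⟩
    have := eq_affine_of_pderiv_const (pderiv j (P r)) (fun i => lam i j * v r)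
      (fun i => hP i j r)
    rw [this]
    congr 1
    rw [Finset.sum_mul]
    refine Finset.sum_congr rfl fun k _ => ?_
    rw [_root_.map_mul]
    ring
  · -- Part 3
    obtain ⟨A, b, hAb⟩ := part2
    intro x₀
    obtain ⟨γ, h0, hd⟩ := affine_flow (m + 1) A b x₀
    refine ⟨γ, h0, fun t => ?_⟩
    have heq : (fun j => eval (γ t) (V j)) = fun j => (∑ l, A j l * γ t l) + b j := by
      funext j
      rw [hAb j]
      simp [eval_add, eval_mul, eval_C, eval_X, MvPolynomial.eval_sum]
    rw [heq]
    exact hd t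
end

section
/- With Φ_K(Z₁, …, Z_K) = M_K(Z_K) ⋯ M₁(Z₁) e₂ₙ as above, Φ_K never takes the value 0, and for K ≥ 3 the map Φ_K is surjective onto ℂ²ⁿ \ {0}; moreover every value is attained at a point with Z₁eₙ ≠ 0. -/
open Matrix

/-- The elementary symplectic matrix mapping: upper triangular for odd `k`,
lower triangular for even `k`. -/
noncomputable def Mk (n : ℕ) (k : ℕ) (Z : Matrix (Fin n) (Fin n) ℂ) :
    Matrix (Fin n ⊕ Fin n) (Fin n ⊕ Fin n) ℂ :=
  if k % 2 = 1 then fromBlocks 1 Z 0 1 else fromBlocks 1 0 Z 1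

/-- `Φ_K(Z₁, …, Z_K) = M_K(Z_K) ⋯ M₁(Z₁) e₂ₙ` (the `Z i` for `i > K` are ignored). -/
noncomputable def Phi (n : ℕ) : ℕ → (ℕ → Matrix (Fin (n + 1)) (Fin (n + 1)) ℂ) → (Fin (n + 1) ⊕ Fin (n + 1) → ℂ)
  | 0, _ => Sum.elim 0 (Pi.single (Fin.last n) 1)
  | k + 1, Z => (Mk (n + 1) (k + 1) (Z (k + 1))).mulVec (Phi n k Z)

lemma vecMulVec_mulVec' {m : ℕ} (a b u : Fin m → ℂ) :
    (vecMulVec a b).mulVec u = (b ⬝ᵥ u) • a := by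
  funext i
  simp [mulVec, vecMulVec_apply, dotProduct, Finset.mul_sum, mul_assoc, mul_comm, mul_left_comm]

/-- For any `u ≠ 0` and any `v`, some symmetric matrix maps `u` to `v`. -/
lemma exists_sym {m : ℕ} (u v : Fin m → ℂ) (hu : u ≠ 0) :
    ∃ Z : Matrix (Fin m) (Fin m) ℂ, Zᵀ = Z ∧ Z.mulVec u = v := by
  obtain ⟨i, hi⟩ : ∃ i, u i ≠ 0 := by
    by_contra h; push_neg at h; exact hu (funext h)
  set d : Fin m → ℂ := Pi.single i 1 with hd
  refine ⟨(u i)⁻¹ • (vecMulVec v d + vecMulVec d v)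
      - ((v ⬝ᵥ u) * (u i)⁻¹ * (u i)⁻¹) • vecMulVec d d, ?_, ?_⟩
  · ext j k
    simp [vecMulVec_apply, mul_comm]
    ring
  · rw [sub_mulVec, smul_mulVec, smul_mulVec, add_mulVec,
      vecMulVec_mulVec', vecMulVec_mulVec', vecMulVec_mulVec']
    have hdu : d ⬝ᵥ u = u i := by simp [hd, single_dotProduct]
    funext j
    simp [hdu, Pi.smul_apply, smul_eq_mul]
    field_simp
    ring

lemma Mk_neg_mul {m k : ℕ} (Z : Matrix (Fin m) (Fin m) ℂ) :
    Mk m k (-Z) * Mk m k Z = 1 := by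
  unfold Mk
  split <;> simp [fromBlocks_multiply, ← fromBlocks_one]

lemma phi_ne_zero (n K : ℕ) (Z : ℕ → Matrix (Fin (n + 1)) (Fin (n + 1)) ℂ) :
    Phi n K Z ≠ 0 := by
  induction K with
  | zero =>
      intro h
      have := congrFun h (Sum.inr (Fin.last n))
      simp [Phi] at this
  | succ k ih =>
      intro h
      apply ih
      have h2 : (Mk (n+1) (k+1) (-(Z (k+1)))).mulVec
          ((Mk (n+1) (k+1) (Z (k+1))).mulVec (Phi n k Z)) = 0 := by
        rw [show (Mk (n+1) (k+1) (Z (k+1))).mulVec (Phi n k Z) = Phi n (k+1) Z from rfl, h]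
        simp
      rwa [mulVec_mulVec, Mk_neg_mul, one_mulVec] at h2

lemma blk_mulVec_odd {m : ℕ} (Z : Matrix (Fin m) (Fin m) ℂ) (a b : Fin m → ℂ) :
    (fromBlocks 1 Z 0 1).mulVec (Sum.elim a b) = Sum.elim (a + Z.mulVec b) b := by
  rw [fromBlocks_mulVec]
  simp only [Sum.elim_comp_inl, Sum.elim_comp_inr, one_mulVec, zero_mulVec, add_zero, zero_add]

lemma blk_mulVec_even {m : ℕ} (Z : Matrix (Fin m) (Fin m) ℂ) (a b : Fin m → ℂ) :
    (fromBlocks 1 0 Z 1).mulVec (Sum.elim a b) = Sum.elim a (Z.mulVec a + b) := by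
  rw [fromBlocks_mulVec]
  simp only [Sum.elim_comp_inl, Sum.elim_comp_inr, one_mulVec, zero_mulVec, add_zero, zero_add]

lemma phi_three (n : ℕ) (Z : ℕ → Matrix (Fin (n + 1)) (Fin (n + 1)) ℂ) :
    Phi n 3 Z = Sum.elim
      ((Z 1).mulVec (Pi.single (Fin.last n) 1) +
        (Z 3).mulVec ((Z 2).mulVec ((Z 1).mulVec (Pi.single (Fin.last n) 1)) + Pi.single (Fin.last n) 1))
      ((Z 2).mulVec ((Z 1).mulVec (Pi.single (Fin.last n) 1)) + Pi.single (Fin.last n) 1) := by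
  have e1 : Mk (n+1) 1 (Z 1) = fromBlocks 1 (Z 1) 0 1 := by norm_num [Mk]
  have e2 : Mk (n+1) 2 (Z 2) = fromBlocks 1 0 (Z 2) 1 := by norm_num [Mk]
  have e3 : Mk (n+1) 3 (Z 3) = fromBlocks 1 (Z 3) 0 1 := by norm_num [Mk]
  show (Mk (n+1) 3 (Z 3)).mulVec ((Mk (n+1) 2 (Z 2)).mulVec ((Mk (n+1) 1 (Z 1)).mulVec
    (Sum.elim 0 (Pi.single (Fin.last n) 1)))) = _
  rw [e1, e2, e3, blk_mulVec_odd, blk_mulVec_even, blk_mulVec_odd, zero_add]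

lemma phi_stable (n : ℕ) (Z : ℕ → Matrix (Fin (n + 1)) (Fin (n + 1)) ℂ)
    (hZ : ∀ i, 4 ≤ i → Z i = 0) : ∀ K, 3 ≤ K → Phi n K Z = Phi n 3 Z := by
  intro K hK
  induction K, hK using Nat.le_induction with
  | base => rfl
  | succ k hk ih =>
      show (Mk (n+1) (k+1) (Z (k+1))).mulVec (Phi n k Z) = _
      rw [hZ (k+1) (by omega), ih]
      have : Mk (n+1) (k+1) (0 : Matrix (Fin (n+1)) (Fin (n+1)) ℂ) = 1 := by
        unfold Mk; split <;> simp [← fromBlocks_one]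
      rw [this, one_mulVec]

theorem phi_ne_zero_and_surjective (n : ℕ) :
    (∀ (K : ℕ) (Z : ℕ → Matrix (Fin (n + 1)) (Fin (n + 1)) ℂ),
      (∀ i, (Z i)ᵀ = Z i) → Phi n K Z ≠ 0) ∧
    (∀ K : ℕ, 3 ≤ K → ∀ y : Fin (n + 1) ⊕ Fin (n + 1) → ℂ, y ≠ 0 →
      ∃ Z : ℕ → Matrix (Fin (n + 1)) (Fin (n + 1)) ℂ,
        (∀ i, (Z i)ᵀ = Z i) ∧ Phi n K Z = y ∧
        (Z 1).mulVec (Pi.single (Fin.last n) 1) ≠ 0) := by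
  constructor
  · intro K Z _
    exact phi_ne_zero n K Z
  · intro K hK y hy
    set e : Fin (n + 1) → ℂ := Pi.single (Fin.last n) 1 with he_def
    have he : e ≠ 0 := by
      intro h
      have := congrFun h (Fin.last n)
      simp [he_def] at this
    set a : Fin (n + 1) → ℂ := fun i => y (Sum.inl i) with ha_def
    set b : Fin (n + 1) → ℂ := fun i => y (Sum.inr i) with hb_def
    have hy_eq : y = Sum.elim a b := by funext x; cases x <;> rfl
    by_cases hb : b = 0
    · -- here `a ≠ 0`; use Z₁ e = a, Z₂ a = -e, Z₃ = 0
      have ha : a ≠ 0 := by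
        intro h
        apply hy
        funext x
        cases x with
        | inl i => exact congrFun h i
        | inr i => exact congrFun hb i
      obtain ⟨Z₁, hZ₁s, hZ₁⟩ := exists_sym e a he
      obtain ⟨Z₂, hZ₂s, hZ₂⟩ := exists_sym a (-e) ha
      refine ⟨fun i => if i = 1 then Z₁ else if i = 2 then Z₂ else 0, ?_, ?_, ?_⟩
      · intro i
        dsimp only
        split
        · exact hZ₁s
        · split
          · exact hZ₂s
          · exact transpose_zero
      · rw [phi_stable n _ (fun i hi => by rw [if_neg (by omega), if_neg (by omega)]) K hK,
          phi_three]
        norm_num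
        have hcol : (fun i => Z₁ i (Fin.last n)) = a := by
          rw [← hZ₁]; funext i; simp [he_def, mulVec, dotProduct_single]
        rw [show Z₁.col (Fin.last n) = a from hcol, ← he_def, hZ₂, neg_add_cancel, hy_eq, hb]
      · show Z₁.mulVec (Pi.single (Fin.last n) 1) ≠ 0
        rw [← he_def, hZ₁]; exact ha
    · -- here `b ≠ 0`; use Z₁ e = e, Z₂ e = b - e, Z₃ b = a - e
      obtain ⟨Z₁, hZ₁s, hZ₁⟩ := exists_sym e e he
      obtain ⟨Z₂, hZ₂s, hZ₂⟩ := exists_sym e (b - e) he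
      obtain ⟨Z₃, hZ₃s, hZ₃⟩ := exists_sym b (a - e) hb
      refine ⟨fun i => if i = 1 then Z₁ else if i = 2 then Z₂ else if i = 3 then Z₃ else 0,
        ?_, ?_, ?_⟩
      · intro i
        dsimp only
        split
        · exact hZ₁s
        · split
          · exact hZ₂s
          · split
            · exact hZ₃s
            · exact transpose_zero
      · rw [phi_stable n _ (fun i hi => by
            rw [if_neg (by omega), if_neg (by omega), if_neg (by omega)]) K hK,
          phi_three]
        norm_num
        have hcol : (fun i => Z₁ i (Fin.last n)) = e := by
          rw [← hZ₁]; funext i; simp [he_def, mulVec, dotProduct_single]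
        rw [show Z₁.col (Fin.last n) = e from hcol, ← he_def, hZ₂, sub_add_cancel, hZ₃, add_sub_cancel, hy_eq]
      · show Z₁.mulVec (Pi.single (Fin.last n) 1) ≠ 0
        rw [← he_def, hZ₁]; exact he
end
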